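/- Consider the greedy L-fold allocation process with m bins (m ≥ 1), a parameter L with 1 ≤ L ≤ m, and a sequence of r items with weights d_1 ≥ d_2 ≥ ⋯ ≥ d_r ≥ 0; let P = Σ_{i=1}^r d_i. For any step i such that d_i > 0 and d_i ≥ 2PL/m, at the moment just before item i is assigned, at least m/2 of the bins have load 0. -/
import Mathlib


/-- The loads of the `m` bins after the first `t` items have been processed by the
greedy `L`-fold allocation process with item weights `d : Fin r → ℝ`:
at each step, the current item is assigned to the `L` bins of minimal current load,
ties broken by the fixed linear order on `Fin m` (lexicographic on (load, index)),
and the load of each of these bins increases by the item's weight. -/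
noncomputable def greedyLoads {m r : ℕ} (L : ℕ) (d : Fin r → ℝ) : ℕ → Fin m → ℝ
  | 0 => fun _ => 0
  | (t + 1) =>
      let prev := greedyLoads L d t
      fun b =>
        if h : t < r then
          if {b' : Fin m | prev b' < prev b ∨ (prev b' = prev b ∧ b' < b)}.ncard < L then
            prev b + d ⟨t, h⟩
          else prev b
        else prev b

private def binRel {m : ℕ} (f : Fin m → ℝ) (a b : Fin m) : Prop :=
  f a < f b ∨ (f a = f b ∧ a < b)

private lemma binRel_trans {m : ℕ} (f : Fin m → ℝ) {a b c : Fin m}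
    (h1 : binRel f a b) (h2 : binRel f b c) : binRel f a c := by
  rcases h1 with h1 | ⟨h1, h1'⟩ <;> rcases h2 with h2 | ⟨h2, h2'⟩
  · exact Or.inl (h1.trans h2)
  · exact Or.inl (h2 ▸ h1)
  · exact Or.inl (h1 ▸ h2)
  · exact Or.inr ⟨h1.trans h2, h1'.trans h2'⟩

private lemma binRel_irrefl {m : ℕ} (f : Fin m → ℝ) (a : Fin m) : ¬ binRel f a a := by
  rintro (h | ⟨-, h⟩) <;> exact lt_irrefl _ h

private lemma binRel_total {m : ℕ} (f : Fin m → ℝ) {a b : Fin m} (hne : a ≠ b) :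
    binRel f a b ∨ binRel f b a := by
  rcases lt_trichotomy (f a) (f b) with h | h | h
  · exact Or.inl (Or.inl h)
  · rcases lt_or_gt_of_ne hne with h' | h'
    · exact Or.inl (Or.inr ⟨h, h'⟩)
    · exact Or.inr (Or.inr ⟨h.symm, h'⟩)
  · exact Or.inr (Or.inl h)

private lemma rank_lt {m : ℕ} (f : Fin m → ℝ) {a b : Fin m} (h : binRel f a b) :
    {b' | binRel f b' a}.ncard < {b' | binRel f b' b}.ncard := by
  apply Set.ncard_lt_ncard _ (Set.toFinite _)
  constructor
  · intro x hx
    exact binRel_trans f hx h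
  · intro hsub
    exact binRel_irrefl f a (hsub h)

private lemma rank_injective {m : ℕ} (f : Fin m → ℝ) :
    Function.Injective (fun b => {b' | binRel f b' b}.ncard) := by
  intro a b hab
  by_contra hne
  rcases binRel_total f hne with h | h
  · exact absurd hab (Nat.ne_of_lt (rank_lt f h))
  · exact absurd hab.symm (Nat.ne_of_lt (rank_lt f h))

private lemma receiving_card_le {m : ℕ} (f : Fin m → ℝ) (L : ℕ) :
    {b : Fin m | {b' | binRel f b' b}.ncard < L}.ncard ≤ L := by
  have h := Set.ncard_le_ncard_of_injOn (fun b => {b' | binRel f b' b}.ncard)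
    (fun a ha => ha) ((rank_injective f).injOn)
    (t := Set.Iio L) (Set.finite_Iio L)
  have hL : (Set.Iio L).ncard = L := by
    rw [Set.ncard_eq_toFinset_card']; simp
  rwa [hL] at h

private lemma greedyLoads_succ {m r : ℕ} (L : ℕ) (d : Fin r → ℝ) (t : ℕ) (b : Fin m) :
    greedyLoads L d (t + 1) b =
      if h : t < r then
        if {b' : Fin m | binRel (greedyLoads L d t) b' b}.ncard < L then
          greedyLoads L d t b + d ⟨t, h⟩
        else greedyLoads L d t b
      else greedyLoads L d t b := rfl

private lemma greedyLoads_nonneg {m r : ℕ} (L : ℕ) (d : Fin r → ℝ)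
    (hd : ∀ i, 0 ≤ d i) : ∀ t (b : Fin m), 0 ≤ greedyLoads L d t b := by
  intro t
  induction t with
  | zero => intro b; exact le_refl 0
  | succ t ih =>
    intro b
    rw [greedyLoads_succ]
    split_ifs with h1 h2
    · exact add_nonneg (ih b) (hd _)
    · exact ih b
    · exact ih b

private lemma greedyLoads_ne_zero_ge {m r : ℕ} (L : ℕ) (d : Fin r → ℝ)
    (hd : ∀ i, 0 ≤ d i) (hmono : ∀ i j : Fin r, i ≤ j → d j ≤ d i) (i : Fin r) :
    ∀ t, t ≤ i.val → ∀ b : Fin m, greedyLoads L d t b ≠ 0 → d i ≤ greedyLoads L d t b := by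
  intro t
  induction t with
  | zero => intro _ b hb; exact absurd rfl hb
  | succ t ih =>
    intro ht b hb
    have htv : t < i.val := Nat.lt_of_succ_le ht
    have ht' : t < r := htv.trans i.isLt
    rw [greedyLoads_succ, dif_pos ht'] at hb ⊢
    split_ifs at hb ⊢ with h2
    · have h3 : d i ≤ d ⟨t, ht'⟩ := hmono ⟨t, ht'⟩ i (Nat.le_of_lt htv)
      have h4 := greedyLoads_nonneg L d hd t b
      linarith
    · exact ih (Nat.le_of_succ_le ht) b hb

private lemma greedyLoads_sum_le {m r : ℕ} (L : ℕ) (d : Fin r → ℝ)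
    (hd : ∀ i, 0 ≤ d i) :
    ∀ t, ∑ b : Fin m, greedyLoads L d t b
      ≤ L * ∑ j : Fin r, (if j.val < t then d j else 0) := by
  classical
  intro t
  induction t with
  | zero => simp [greedyLoads]
  | succ t ih =>
    by_cases hr : t < r
    · set f := greedyLoads (m := m) L d t with hf
      have hcard : (Finset.univ.filter
          (fun b : Fin m => {b' | binRel f b' b}.ncard < L)).card ≤ L := by
        have := receiving_card_le f L
        rwa [Set.ncard_eq_toFinset_card', Set.toFinset_setOf] at this
      have hsum : ∑ b : Fin m, greedyLoads L d (t + 1) b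
          = ∑ b : Fin m, f b
            + ((Finset.univ.filter
                (fun b : Fin m => {b' | binRel f b' b}.ncard < L)).card : ℝ) * d ⟨t, hr⟩ := by
        have : ∀ b : Fin m, greedyLoads L d (t + 1) b
            = f b + (if {b' | binRel f b' b}.ncard < L then d ⟨t, hr⟩ else 0) := by
          intro b
          rw [greedyLoads_succ, dif_pos hr]
          split_ifs <;> ring
        rw [Finset.sum_congr rfl (fun b _ => this b), Finset.sum_add_distrib]
        congr 1
        rw [Finset.sum_ite, Finset.sum_const, Finset.sum_const_zero, add_zero,
          nsmul_eq_mul]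
      have hrhs : ∑ j : Fin r, (if j.val < t + 1 then d j else 0)
          = ∑ j : Fin r, (if j.val < t then d j else 0) + d ⟨t, hr⟩ := by
        have : ∀ j : Fin r, (if j.val < t + 1 then d j else 0)
            = (if j.val < t then d j else 0) + (if j = ⟨t, hr⟩ then d j else 0) := by
          intro j
          rcases Nat.lt_trichotomy j.val t with h | h | h
          · rw [if_pos (h.trans (Nat.lt_succ_self t)), if_pos h,
              if_neg (by intro hj; rw [hj] at h; exact lt_irrefl _ h), add_zero]
          · rw [if_pos (by omega), if_neg (by omega),
              if_pos (Fin.ext h), zero_add]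
          · rw [if_neg (by omega), if_neg (by omega),
              if_neg (by intro hj; rw [hj] at h; simp at h), add_zero]
        rw [Finset.sum_congr rfl (fun j _ => this j), Finset.sum_add_distrib,
          Finset.sum_ite_eq' Finset.univ ⟨t, hr⟩ d, if_pos (Finset.mem_univ _)]
      rw [hsum, hrhs, mul_add]
      have h1 : ((Finset.univ.filter
            (fun b : Fin m => {b' | binRel f b' b}.ncard < L)).card : ℝ) * d ⟨t, hr⟩
          ≤ (L : ℝ) * d ⟨t, hr⟩ :=
        mul_le_mul_of_nonneg_right (by exact_mod_cast hcard) (hd _)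
      linarith
    · have h1 : ∀ b : Fin m, greedyLoads L d (t + 1) b = greedyLoads L d t b := by
        intro b; rw [greedyLoads_succ, dif_neg hr]
      have h2 : ∀ j : Fin r, (if j.val < t + 1 then d j else 0)
          = (if j.val < t then d j else 0) := by
        intro j
        have : j.val < t := by omega
        rw [if_pos (by omega), if_pos this]
      rw [Finset.sum_congr rfl (fun b _ => h1 b),
        Finset.sum_congr rfl (fun j _ => h2 j)]
      exact ih

/-- In the greedy `L`-fold allocation with `m ≥ 1` bins, `1 ≤ L ≤ m`, and nonincreasing
nonnegative weights with total weight `P`: for any step `i` with `d i > 0` and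
`d i ≥ 2PL/m`, just before item `i` is assigned at least `m/2` bins have load `0`. -/
theorem greedy_allocation_many_empty_bins
    {m r : ℕ} (hm : 1 ≤ m) (L : ℕ) (hL1 : 1 ≤ L) (hLm : L ≤ m)
    (d : Fin r → ℝ) (hmono : ∀ i j : Fin r, i ≤ j → d j ≤ d i)
    (hnonneg : ∀ i : Fin r, 0 ≤ d i)
    (P : ℝ) (hP : P = ∑ i : Fin r, d i)
    (i : Fin r) (hpos : 0 < d i) (hbig : 2 * P * L / m ≤ d i) :
    (m : ℝ) / 2 ≤ ({b : Fin m | greedyLoads L d i.val b = 0}.ncard : ℝ) := by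
  classical
  set f := greedyLoads (m := m) L d i.val with hf
  set Z := Finset.univ.filter (fun b : Fin m => f b = 0) with hZ
  set N := Finset.univ.filter (fun b : Fin m => ¬ f b = 0) with hN
  have hZN : Z.card + N.card = m := by
    rw [hZ, hN, Finset.card_filter_add_card_filter_not]
    simp
  -- lower bound on sum over N
  have hNlow : (N.card : ℝ) * d i ≤ ∑ b ∈ N, f b := by
    have : ∀ b ∈ N, d i ≤ f b := by
      intro b hb
      rw [hN, Finset.mem_filter] at hb
      exact greedyLoads_ne_zero_ge L d hnonneg hmono i i.val le_rfl b hb.2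
    calc (N.card : ℝ) * d i = ∑ _b ∈ N, d i := by rw [Finset.sum_const]; ring
    _ ≤ ∑ b ∈ N, f b := Finset.sum_le_sum this
  have hsub : ∑ b ∈ N, f b ≤ ∑ b : Fin m, f b := by
    apply Finset.sum_le_sum_of_subset_of_nonneg (Finset.subset_univ N)
    intro b _ _
    exact greedyLoads_nonneg L d hnonneg i.val b
  have hsumle : ∑ b : Fin m, f b ≤ L * P := by
    have h1 := greedyLoads_sum_le (m := m) L d hnonneg i.val
    have h2 : ∑ j : Fin r, (if j.val < i.val then d j else 0) ≤ P := by
      rw [hP]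
      apply Finset.sum_le_sum
      intro j _
      split_ifs
      · exact le_rfl
      · exact hnonneg j
    have hL0 : (0:ℝ) ≤ L := Nat.cast_nonneg L
    calc ∑ b : Fin m, f b ≤ L * ∑ j : Fin r, (if j.val < i.val then d j else 0) := h1
    _ ≤ L * P := mul_le_mul_of_nonneg_left h2 hL0
  have hm0 : (0:ℝ) < m := by exact_mod_cast hm
  have hbig' : 2 * P * L ≤ m * d i := by
    rw [div_le_iff₀ hm0] at hbig
    linarith
  have hNle : (N.card : ℝ) ≤ (m : ℝ) / 2 := by
    have h1 : (N.card : ℝ) * d i ≤ (m : ℝ) / 2 * d i := by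
      calc (N.card : ℝ) * d i ≤ L * P := le_trans hNlow (le_trans hsub hsumle)
      _ ≤ (m : ℝ) / 2 * d i := by linarith
    exact le_of_mul_le_mul_right h1 hpos
  have hZcard : ({b : Fin m | f b = 0}.ncard : ℝ) = (Z.card : ℝ) := by
    rw [Set.ncard_eq_toFinset_card', Set.toFinset_setOf]
  rw [hZcard]
  have : (Z.card : ℝ) + (N.card : ℝ) = m := by exact_mod_cast hZN
  linarith
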